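/- Let n ≥ 3, 1 ≤ k ≤ n-1, and let M be an n×n positive reciprocal matrix. Define the k×k matrix A by a_ii = 1 and a_ij = -m_ij/(n-1) for i ≠ j (i, j ≤ k). If M is consistent, then A is a nonsingular M-matrix: A⁻¹ exists and A⁻¹ ≥ 0 entrywise. -/

import Mathlib

theorem stmt11 (n k : ℕ) (hn : 3 ≤ n) (hk : 1 ≤ k) (hkn : k ≤ n - 1)
    (M : Matrix (Fin n) (Fin n) ℝ)
    (hpos : ∀ i j, 0 < M i j) (hrec : ∀ i j, M j i = 1 / M i j)
    (hcons : ∀ i j l, M i j * M j l * M l i = 1)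
    (A : Matrix (Fin k) (Fin k) ℝ)
    (hA : ∀ i j : Fin k, A i j =
      if i = j then 1
      else -(M (Fin.castLE (by omega) i) (Fin.castLE (by omega) j)) / ((n : ℝ) - 1)) :
    IsUnit A.det ∧ ∀ i j, 0 ≤ A⁻¹ i j := by
  have hkn' : k < n := by omega
  have h0 : 0 < n := by omega
  have hn1 : (3:ℝ) ≤ (n:ℝ) := by exact_mod_cast hn
  have hkr : (k:ℝ) < (n:ℝ) := by exact_mod_cast hkn'
  have hkr1 : (1:ℝ) ≤ (k:ℝ) := by exact_mod_cast hk
  have hne1 : (n:ℝ) - 1 ≠ 0 := by linarith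
  have hnen : (n:ℝ) ≠ 0 := by linarith
  have hnek : (n:ℝ) - (k:ℝ) ≠ 0 := by linarith
  set e : Fin k → Fin n := Fin.castLE (by omega) with he
  set z : Fin n := ⟨0, h0⟩ with hz
  set w : Fin n → ℝ := fun i => M i z with hwdef
  have hw : ∀ i, 0 < w i := fun i => hpos i z
  have hM : ∀ i j, M i j = w i / w j := by
    intro i j
    have h := hcons i j z
    have h2 : M z i = 1 / M i z := hrec i z
    rw [h2] at h
    have hwi := (hw i).ne'
    have hwj := (hw j).ne'
    field_simp at h ⊢
    have h' : M i j * w j = w i := (div_eq_one_iff_eq hwi).mp h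
    linarith [h']
  set a : ℝ := 1 / ((n:ℝ) - 1) with ha
  set α : ℝ := ((n:ℝ)-1)/n with hα
  set β : ℝ := ((n:ℝ)-1)/((n:ℝ)*((n:ℝ)-k)) with hβ
  have hα0 : 0 < α := by apply div_pos <;> linarith
  have hβ0 : 0 < β := by
    apply div_pos
    · linarith
    · apply mul_pos <;> linarith
  set B : Matrix (Fin k) (Fin k) ℝ :=
    fun i j => (if i = j then α else 0) + β * (w (e i) / w (e j)) with hB
  have hA' : ∀ i l : Fin k, A i l = (1+a) * (if i = l then 1 else 0) - a * (w (e i) / w (e l)) := by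
    intro i l
    rw [hA]
    by_cases h : i = l
    · subst h
      rw [if_pos rfl, if_pos rfl, div_self (hw (e i)).ne']
      ring
    · rw [if_neg h, if_neg h, hM, ha]
      ring
  have hAB : A * B = 1 := by
    ext i j
    rw [Matrix.mul_apply]
    have hwi := (hw (e i)).ne'
    have hwj := (hw (e j)).ne'
    have expand : ∀ l : Fin k, A i l * B l j =
        (if i = l then (1+a) * ((if i = j then α else 0) + β * (w (e i) / w (e j))) else 0)
        + ((if l = j then -(a * α) * (w (e i) / w (e j)) else 0)
        + (- (a * β * (w (e i) / w (e j))))) := by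
      intro l
      have hwl := (hw (e l)).ne'
      rw [hA']
      show ((1+a) * (if i = l then 1 else 0) - a * (w (e i) / w (e l))) *
        ((if l = j then α else 0) + β * (w (e l) / w (e j))) = _
      by_cases h1 : i = l
      · subst h1
        rw [if_pos rfl, if_pos rfl, div_self hwi]
        by_cases h2 : i = j
        · subst h2
          rw [if_pos rfl, if_pos rfl, div_self hwi]
          ring
        · rw [if_neg h2, if_neg h2]
          ring
      · rw [if_neg h1, if_neg h1]
        by_cases h2 : l = j
        · subst h2
          rw [if_pos rfl, if_pos rfl, div_self hwl]
          ring
        · rw [if_neg h2, if_neg h2]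
          field_simp
          ring
    rw [Finset.sum_congr rfl (fun l _ => expand l)]
    rw [Finset.sum_add_distrib, Finset.sum_add_distrib]
    rw [Finset.sum_ite_eq, Finset.sum_ite_eq']
    simp only [Finset.mem_univ, if_true, Finset.sum_const, Finset.card_univ, Fintype.card_fin,
      nsmul_eq_mul, Matrix.one_apply]
    by_cases h : i = j
    · subst h
      rw [if_pos rfl, if_pos rfl, div_self hwi, ha, hα, hβ]
      field_simp
      ring
    · rw [if_neg h, if_neg h, ha, hα, hβ]
      field_simp
      ring
  refine ⟨Matrix.isUnit_det_of_right_inverse hAB, ?_⟩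
  rw [Matrix.inv_eq_right_inv hAB]
  intro i j
  show 0 ≤ (if i = j then α else 0) + β * (w (e i) / w (e j))
  have h1 := hw (e i)
  have h2 := hw (e j)
  by_cases h : i = j <;> simp [h] <;> positivity
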